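/- Let $f(n) = \sum_{i=1}^{M} p_i(n) \cdot b_i^n$ where the $b_i > 0$ are pairwise distinct positive reals and each $p_i$ is a nonzero real polynomial. If $f$ is not identically zero, then $f$ (as a function of a real variable $n$) has at most $\left(\sum_{i=1}^M (\deg p_i + 1)\right) - 1$ real roots. -/

import Mathlib

open Set

private lemma rolle_count {f f' : ℝ → ℝ} (hd : ∀ x, HasDerivAt f (f' x) x)
    (hfin : {x : ℝ | f' x = 0}.Finite) :
    {x : ℝ | f x = 0}.Finite ∧ {x : ℝ | f x = 0}.ncard ≤ {x : ℝ | f' x = 0}.ncard + 1 := by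
  set k := {x : ℝ | f' x = 0}.ncard with hk
  have key : ∀ t : Finset ℝ, ↑t ⊆ {x : ℝ | f x = 0} → t.card ≤ k + 1 := by
    intro t ht
    by_contra hcard
    push_neg at hcard
    set m := t.card with hm
    have hm2 : 2 ≤ m := by omega
    let e := t.orderIsoOfFin rfl
    have hz : ∀ i : Fin m, f (e i : ℝ) = 0 := fun i => ht (e i).2
    have hroll : ∀ i : Fin (m - 1), ∃ y : ℝ,
        (e ⟨i, by omega⟩ : ℝ) < y ∧ y < (e ⟨i + 1, by omega⟩ : ℝ) ∧ f' y = 0 := by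
      intro i
      have hlt : (e ⟨i, by omega⟩ : ℝ) < (e ⟨i + 1, by omega⟩ : ℝ) := by
        have := e.strictMono (show (⟨i, by omega⟩ : Fin m) < ⟨i + 1, by omega⟩ by
          simp [Fin.lt_def])
        exact this
      obtain ⟨y, hy1, hy2⟩ := exists_hasDerivAt_eq_zero hlt
        (fun x _ => (hd x).continuousAt.continuousWithinAt)
        (by rw [hz, hz]) (fun x _ => hd x)
      exact ⟨y, hy1.1, hy1.2, hy2⟩
    choose y hy1 hy2 hy3 using hroll
    have hmono : ∀ i j : Fin (m - 1), i < j → y i < y j := by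
      intro i j hij
      have h1 : (e ⟨i + 1, by omega⟩ : ℝ) ≤ (e ⟨j, by omega⟩ : ℝ) := by
        have := e.monotone (show (⟨i + 1, by omega⟩ : Fin m) ≤ ⟨j, by omega⟩ by
          simp [Fin.le_def]; omega)
        exact this
      exact (hy2 i).trans_le (h1.trans (hy1 j).le)
    have hinj : Function.Injective y := by
      intro i j h
      rcases lt_trichotomy i j with hij | hij | hij
      · exact absurd h (ne_of_lt (hmono i j hij))
      · exact hij
      · exact absurd h.symm (ne_of_lt (hmono j i hij))
    have hle : m - 1 ≤ k := by
      have := Finset.card_le_card_of_injOn y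
        (fun i _ => hfin.mem_toFinset.mpr (hy3 i))
        (fun a _ b _ h => hinj h) (s := (Finset.univ : Finset (Fin (m - 1))))
        (t := hfin.toFinset)
      simpa [hk, Set.ncard_eq_toFinset_card _ hfin] using this
    omega
  have hfin2 : {x : ℝ | f x = 0}.Finite := by
    rw [← Set.not_infinite]
    intro h
    obtain ⟨t, hts, htc⟩ := (Set.Infinite.exists_subset_card_eq h (k + 2))
    have := key t hts
    omega
  refine ⟨hfin2, ?_⟩
  have := key hfin2.toFinset (by simp)
  rwa [Set.ncard_eq_toFinset_card _ hfin2]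

private lemma q_aux {a : ℝ} (ha : a ≠ 0) {p : Polynomial ℝ} (hp : p ≠ 0) :
    (Polynomial.derivative p + Polynomial.C a * p) ≠ 0 ∧
      (Polynomial.derivative p + Polynomial.C a * p).natDegree = p.natDegree := by
  set d := p.natDegree with hd
  have hco : (Polynomial.derivative p + Polynomial.C a * p).coeff d = a * p.coeff d := by
    simp [Polynomial.coeff_derivative, Polynomial.coeff_natDegree_succ_eq_zero]
    exact Or.inl (Polynomial.coeff_eq_zero_of_natDegree_lt (by omega))
  have hcne : (Polynomial.derivative p + Polynomial.C a * p).coeff d ≠ 0 := by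
    rw [hco]
    exact mul_ne_zero ha (Polynomial.leadingCoeff_ne_zero.mpr hp)
  have hne : (Polynomial.derivative p + Polynomial.C a * p) ≠ 0 := fun h => by
    simp [h] at hcne
  refine ⟨hne, le_antisymm ?_ (Polynomial.le_natDegree_of_ne_zero hcne)⟩
  refine (Polynomial.natDegree_add_le _ _).trans (max_le ?_ ?_)
  · exact (Polynomial.natDegree_derivative_le p).trans (Nat.sub_le _ _)
  · exact le_of_eq (Polynomial.natDegree_C_mul ha)

private lemma deriv_aux {p : Polynomial ℝ} (hdeg : p.natDegree ≠ 0) :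
    Polynomial.derivative p ≠ 0 ∧
      (Polynomial.derivative p).natDegree + 1 = p.natDegree := by
  set d := p.natDegree with hd
  have h1 : d - 1 + 1 = d := by omega
  have hco : (Polynomial.derivative p).coeff (d - 1) = p.coeff d * d := by
    have h2 : ((d - 1 : ℕ) : ℝ) + 1 = d := by
      rw [Nat.cast_sub (by omega)]; push_cast; ring
    rw [Polynomial.coeff_derivative, h1, h2]
  have hp : p ≠ 0 := fun h => hdeg (by simp [hd, h])
  have hcne : (Polynomial.derivative p).coeff (d - 1) ≠ 0 := by
    rw [hco]
    exact mul_ne_zero (Polynomial.leadingCoeff_ne_zero.mpr hp) (Nat.cast_ne_zero.mpr hdeg)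
  have hne : Polynomial.derivative p ≠ 0 := fun h => by simp [h] at hcne
  have hge : d - 1 ≤ (Polynomial.derivative p).natDegree :=
    Polynomial.le_natDegree_of_ne_zero hcne
  have hle := Polynomial.natDegree_derivative_le p
  exact ⟨hne, by omega⟩

private lemma polya_key {ι : Type*} [DecidableEq ι] :
    ∀ (N : ℕ) (s : Finset ι) (b : ι → ℝ) (p : ι → Polynomial ℝ),
      s.Nonempty → (∀ i ∈ s, 0 < b i) → Set.InjOn b ↑s → (∀ i ∈ s, p i ≠ 0) →
      (∑ i ∈ s, ((p i).natDegree + 1) = N) →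
      {x : ℝ | ∑ i ∈ s, (p i).eval x * (b i) ^ x = 0}.Finite ∧
      {x : ℝ | ∑ i ∈ s, (p i).eval x * (b i) ^ x = 0}.ncard ≤ N - 1 := by
  intro N
  induction N using Nat.strong_induction_on with
  | _ N IH =>
  intro s b p hs hb hbinj hp hN
  obtain ⟨j, hj⟩ := hs
  have hbj : 0 < b j := hb j hj
  set c : ι → ℝ := fun i => b i / b j with hc
  set q : ι → Polynomial ℝ := fun i =>
    Polynomial.derivative (p i) + Polynomial.C (Real.log (c i)) * p i with hq
  have hcpos : ∀ i ∈ s, 0 < c i := fun i hi => div_pos (hb i hi) hbj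
  have hcj : c j = 1 := div_self hbj.ne'
  have hcinj : Set.InjOn c ↑s := by
    intro i hi i' hi' h
    apply hbinj hi hi'
    have := congrArg (· * b j) h
    simpa [hc, div_mul_cancel₀, hbj.ne'] using this
  have hlog : ∀ i ∈ s, i ≠ j → Real.log (c i) ≠ 0 := by
    intro i hi hij
    exact Real.log_ne_zero_of_pos_of_ne_one (hcpos i hi)
      (fun h => hij (hcinj hi hj (h.trans hcj.symm)))
  have hq_ne : ∀ i ∈ s, i ≠ j → q i ≠ 0 ∧ (q i).natDegree = (p i).natDegree :=
    fun i hi hij => q_aux (hlog i hi hij) (hp i hi)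
  -- zero set equality
  have hset : {x : ℝ | ∑ i ∈ s, (p i).eval x * b i ^ x = 0}
      = {x : ℝ | ∑ i ∈ s, (p i).eval x * c i ^ x = 0} := by
    ext x
    simp only [Set.mem_setOf_eq]
    have hkey : ∑ i ∈ s, (p i).eval x * b i ^ x
        = (∑ i ∈ s, (p i).eval x * c i ^ x) * (b j) ^ x := by
      rw [Finset.sum_mul]
      refine Finset.sum_congr rfl fun i hi => ?_
      rw [mul_assoc, ← Real.mul_rpow (hcpos i hi).le hbj.le, hc]
      rw [div_mul_cancel₀ _ hbj.ne']
    rw [hkey, mul_eq_zero]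
    have hne : (b j : ℝ) ^ x ≠ 0 := (Real.rpow_pos_of_pos hbj x).ne'
    tauto
  -- derivative
  set g : ℝ → ℝ := fun x => ∑ i ∈ s, (p i).eval x * c i ^ x with hg
  set g' : ℝ → ℝ := fun x => ∑ i ∈ s, (q i).eval x * c i ^ x with hg'
  have hderiv : ∀ x, HasDerivAt g (g' x) x := by
    intro x
    apply HasDerivAt.fun_sum
    intro i hi
    have h1 : HasDerivAt (fun y : ℝ => (p i).eval y)
        ((Polynomial.derivative (p i)).eval x) x := (p i).hasDerivAt x
    have h2 : HasDerivAt (fun y : ℝ => (c i) ^ y)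
        ((c i) ^ x * Real.log (c i)) x :=
      (Real.hasStrictDerivAt_const_rpow (hcpos i hi) x).hasDerivAt
    have := h1.fun_mul h2
    refine this.congr_deriv ?_
    simp [hq]
    ring
  rw [hset]
  by_cases hdeg : (p j).natDegree = 0
  · by_cases hsj : s = {j}
    · -- single constant term : no zeros
      have hpj := Polynomial.eq_C_of_natDegree_eq_zero hdeg
      have hempty : {x : ℝ | ∑ i ∈ s, (p i).eval x * c i ^ x = 0} = ∅ := by
        ext x
        simp only [hsj, Finset.sum_singleton, Set.mem_setOf_eq,
          Set.mem_empty_iff_false, iff_false]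
        intro h
        rcases mul_eq_zero.1 h with h | h
        · rw [hpj] at h
          simp at h
          exact hp j hj (by rw [hpj, h]; simp)
        · exact (Real.rpow_pos_of_pos (hcpos j hj) x).ne' h
      rw [hempty]
      simp
    · -- s has another element
      obtain ⟨i0, hi0s, hi0j⟩ : ∃ i ∈ s, i ≠ j := by
        by_contra h
        push_neg at h
        exact hsj (Finset.eq_singleton_iff_unique_mem.mpr ⟨hj, h⟩)
      have hqj0 : q j = 0 := by
        have hpc := Polynomial.eq_C_of_natDegree_eq_zero hdeg
        simp [hq, hcj]
        rw [hpc]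
        simp
      have hg'e : ∀ x, g' x = ∑ i ∈ s.erase j, (q i).eval x * c i ^ x := by
        intro x
        rw [hg']
        exact (Finset.sum_erase _ (by simp [hqj0])).symm
      have hsum : ∑ i ∈ s.erase j, ((q i).natDegree + 1) = N - 1 := by
        have h1 : ∑ i ∈ s.erase j, ((q i).natDegree + 1)
            = ∑ i ∈ s.erase j, ((p i).natDegree + 1) :=
          Finset.sum_congr rfl fun i hi => by
            rw [(hq_ne i (Finset.mem_of_mem_erase hi) (Finset.ne_of_mem_erase hi)).2]
        have h2 : ∑ i ∈ s.erase j, ((p i).natDegree + 1) + ((p j).natDegree + 1) = N := by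
          rw [Finset.sum_erase_add s _ hj]
          exact hN
        omega
      have hN2 : 2 ≤ N := by
        have h3 : (q i0).natDegree + 1 ≤ ∑ i ∈ s.erase j, ((q i).natDegree + 1) :=
          Finset.single_le_sum (f := fun i => (q i).natDegree + 1)
            (fun i _ => Nat.zero_le _) (Finset.mem_erase.mpr ⟨hi0j, hi0s⟩)
        omega
      obtain ⟨hfin', hcard'⟩ := IH (N - 1) (by omega) (s.erase j) c q
        ⟨i0, Finset.mem_erase.mpr ⟨hi0j, hi0s⟩⟩
        (fun i hi => hcpos i (Finset.mem_of_mem_erase hi))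
        (hcinj.mono (by intro a ha; exact Finset.mem_of_mem_erase ha))
        (fun i hi => (hq_ne i (Finset.mem_of_mem_erase hi) (Finset.ne_of_mem_erase hi)).1)
        hsum
      have hsetg' : {x : ℝ | g' x = 0}
          = {x : ℝ | ∑ i ∈ s.erase j, (q i).eval x * c i ^ x = 0} := by
        ext x; rw [Set.mem_setOf_eq, Set.mem_setOf_eq, hg'e]
      obtain ⟨hfin, hcard⟩ := rolle_count hderiv (hsetg' ▸ hfin')
      refine ⟨hfin, ?_⟩
      rw [hsetg'] at hcard
      have hgs : {x : ℝ | ∑ i ∈ s, (p i).eval x * c i ^ x = 0} = {x : ℝ | g x = 0} := rfl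
      rw [hgs]
      omega
  · -- degree of p j is positive : differentiate, same index set
    obtain ⟨hqjne, hqjdeg⟩ := deriv_aux hdeg
    have hqj : q j = Polynomial.derivative (p j) := by
      simp [hq, hcj]
    have hsum : ∑ i ∈ s, ((q i).natDegree + 1) = N - 1 := by
      have h2 : ∑ i ∈ s.erase j, ((q i).natDegree + 1) + ((q j).natDegree + 1)
          = ∑ i ∈ s, ((q i).natDegree + 1) := Finset.sum_erase_add s _ hj
      have h3 : ∑ i ∈ s.erase j, ((p i).natDegree + 1) + ((p j).natDegree + 1) = N := by
        rw [Finset.sum_erase_add s _ hj]; exact hN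
      have h4 : ∑ i ∈ s.erase j, ((q i).natDegree + 1)
          = ∑ i ∈ s.erase j, ((p i).natDegree + 1) :=
        Finset.sum_congr rfl fun i hi => by
          rw [(hq_ne i (Finset.mem_of_mem_erase hi) (Finset.ne_of_mem_erase hi)).2]
      have h5 : (q j).natDegree + 1 = (p j).natDegree := by rw [hqj]; exact hqjdeg
      omega
    have hN2 : 2 ≤ N := by
      have h3 : (p j).natDegree + 1 ≤ ∑ i ∈ s, ((p i).natDegree + 1) :=
        Finset.single_le_sum (f := fun i => (p i).natDegree + 1)
          (fun i _ => Nat.zero_le _) hj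
      omega
    have hqne : ∀ i ∈ s, q i ≠ 0 := by
      intro i hi
      by_cases hij : i = j
      · rw [hij, hqj]; exact hqjne
      · exact (hq_ne i hi hij).1
    obtain ⟨hfin', hcard'⟩ := IH (N - 1) (by omega) s c q ⟨j, hj⟩ hcpos hcinj hqne hsum
    have hsetg' : {x : ℝ | g' x = 0}
        = {x : ℝ | ∑ i ∈ s, (q i).eval x * c i ^ x = 0} := rfl
    obtain ⟨hfin, hcard⟩ := rolle_count hderiv (hsetg' ▸ hfin')
    refine ⟨hfin, ?_⟩
    rw [hsetg'] at hcard
    have hgs : {x : ℝ | ∑ i ∈ s, (p i).eval x * c i ^ x = 0} = {x : ℝ | g x = 0} := rfl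
    rw [hgs]
    omega

/-- Pólya: a nonzero exponential sum `∑ pᵢ(n) bᵢⁿ` with pairwise distinct positive
bases and nonzero polynomials has at most `(∑ (deg pᵢ + 1)) - 1` real roots. -/
theorem stmt_0 (M : ℕ) (hM : 1 ≤ M) (b : Fin M → ℝ) (hb : ∀ i, 0 < b i)
    (hbinj : Function.Injective b)
    (p : Fin M → Polynomial ℝ) (hp : ∀ i, p i ≠ 0)
    (f : ℝ → ℝ)
    (hf : ∀ n : ℝ, f n = ∑ i, (p i).eval n * (b i) ^ n)
    (hnz : ∃ n : ℝ, f n ≠ 0) :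
    {n : ℝ | f n = 0}.Finite ∧
      {n : ℝ | f n = 0}.ncard ≤ (∑ i, ((p i).natDegree + 1)) - 1 := by
  have : Nonempty (Fin M) := ⟨⟨0, hM⟩⟩
  have hkey := polya_key (∑ i, ((p i).natDegree + 1)) (Finset.univ : Finset (Fin M))
    b p Finset.univ_nonempty (fun i _ => hb i) (hbinj.injOn)
    (fun i _ => hp i) rfl
  have hs : {n : ℝ | f n = 0} = {x : ℝ | ∑ i, (p i).eval x * (b i) ^ x = 0} := by
    ext x
    simp only [Set.mem_setOf_eq, hf]
  rw [hs]
  exact hkey
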